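/- For a good fundamental domain F and any γ ∈ Γ with reduced word length at least 2 (i.e. γ ∉ {id, γ₁^{±1},…,γ_g^{±1}}), we have γF ∩ F = ∅. -/

import Mathlib

open Pointwise

private lemma pingpong_aux {X : Type*} {G : Type*} [Group G]
    [MulAction G X] {g : ℕ} (γ : Fin g → G) (B B' Bp B'p : Fin g → Set X)
    (hBsub : ∀ i, B i ⊆ Bp i) (hB'sub : ∀ i, B' i ⊆ B'p i)
    (hdisj1 : ∀ i j, i ≠ j → Disjoint (Bp i) (Bp j))
    (hdisj2 : ∀ i j, i ≠ j → Disjoint (B'p i) (B'p j))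
    (hdisj3 : ∀ i j, Disjoint (Bp i) (B'p j))
    (hmap : ∀ i, γ i • (B' i)ᶜ = Bp i)
    (hmap' : ∀ i, (γ i)⁻¹ • (B i)ᶜ = B'p i)
    (b : X) (hbB : ∀ i, b ∉ B i) (hbB' : ∀ i, b ∉ B' i)
    (p : Fin g × Bool) (t : List (Fin g × Bool))
    (hchain : List.Chain' (fun a c : Fin g × Bool => a.1 = c.1 → a.2 = c.2) (p :: t)) :
    (((p :: t).map (fun q => if q.2 then γ q.1 else (γ q.1)⁻¹)).prod • b
        ∈ (if p.2 then Bp p.1 else B'p p.1)) ∧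
      (t ≠ [] → ((p :: t).map (fun q => if q.2 then γ q.1 else (γ q.1)⁻¹)).prod • b
        ∈ (if p.2 then B p.1 else B' p.1)) := by
  induction t generalizing p with
  | nil =>
      refine ⟨?_, by simp⟩
      simp only [List.map_cons, List.map_nil, List.prod_cons, List.prod_nil, mul_one]
      obtain ⟨i, s⟩ := p
      cases s with
      | true =>
          show γ i • b ∈ Bp i
          rw [← hmap i]
          exact Set.smul_mem_smul_set (hbB' i)
      | false =>
          show (γ i)⁻¹ • b ∈ B'p i
          rw [← hmap' i]
          exact Set.smul_mem_smul_set (hbB i)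
  | cons q t ih =>
      have hchain' : List.Chain' (fun a c : Fin g × Bool => a.1 = c.1 → a.2 = c.2) (q :: t) :=
        hchain.tail
      have hpq : p.1 = q.1 → p.2 = q.2 := (List.isChain_cons_cons.mp hchain).1
      obtain ⟨hq, -⟩ := ih q hchain'
      set x := ((q :: t).map (fun r => if r.2 then γ r.1 else (γ r.1)⁻¹)).prod • b with hx
      have hstep : ((p :: q :: t).map (fun r => if r.2 then γ r.1 else (γ r.1)⁻¹)).prod • b
          = (if p.2 then γ p.1 else (γ p.1)⁻¹) • x := by
        rw [hx, List.map_cons, List.prod_cons, mul_smul]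
      rw [hstep]
      obtain ⟨i, s⟩ := p
      cases s with
      | true =>
          -- letter γ i ; need x ∉ B'p i
          have hxnot : x ∉ B'p i := by
            intro hmem
            rcases Bool.eq_false_or_eq_true q.2 with hq2 | hq2
            · rw [if_pos hq2] at hq
              exact (hdisj3 q.1 i).ne_of_mem hq hmem rfl
            · rw [if_neg (by simp [hq2])] at hq
              have hne : q.1 ≠ i := by
                intro h
                have := hpq (by simp [h])
                simp [hq2] at this
              exact (hdisj2 q.1 i hne).ne_of_mem hq hmem rfl
          have hxmem : γ i • x ∈ B i := by
            have : x ∈ (γ i)⁻¹ • (B i) := by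
              have hc : ((γ i)⁻¹ • (B i))ᶜ = B'p i := by
                rw [← hmap' i, ← Set.smul_set_compl]
              rw [← compl_compl ((γ i)⁻¹ • B i), hc]
              exact hxnot
            rwa [Set.mem_inv_smul_set_iff] at this
          exact ⟨by simpa using hBsub i hxmem, fun _ => by simpa using hxmem⟩
      | false =>
          have hxnot : x ∉ Bp i := by
            intro hmem
            rcases Bool.eq_false_or_eq_true q.2 with hq2 | hq2
            · rw [if_pos hq2] at hq
              have hne : i ≠ q.1 := by
                intro h
                have := hpq (by simp [h])
                simp [hq2] at this
              exact (hdisj1 i q.1 hne).ne_of_mem hmem hq rfl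
            · rw [if_neg (by simp [hq2])] at hq
              exact (hdisj3 i q.1).ne_of_mem hmem hq rfl
          have hxmem : (γ i)⁻¹ • x ∈ B' i := by
            have : x ∈ γ i • (B' i) := by
              have hc : (γ i • (B' i))ᶜ = Bp i := by
                rw [← hmap i, ← Set.smul_set_compl]
              rw [← compl_compl (γ i • B' i), hc]
              exact hxnot
            rwa [Set.mem_smul_set_iff_inv_smul_mem] at this
          exact ⟨by simpa using hB'sub i hxmem, fun _ => by simpa using hxmem⟩

/-- Theorem 2.6(3): for a good fundamental domain
`F = P¹ \ (B₁ ∪ … ∪ B_g ∪ B₁' ∪ … ∪ B_g')` and any `γ ∈ Γ` whose reduced word has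
length at least `2` (i.e. `γ ∉ {id, γ₁^{±1}, …, γ_g^{±1}}`), we have `γF ∩ F = ∅`. -/
theorem good_fundamental_domain_translate_disjoint {X : Type*} {G : Type*} [Group G]
    [MulAction G X] {g : ℕ} (γ : Fin g → G) (B B' Bp B'p : Fin g → Set X)
    (hBsub : ∀ i, B i ⊆ Bp i) (hB'sub : ∀ i, B' i ⊆ B'p i)
    (hdisj1 : ∀ i j, i ≠ j → Disjoint (Bp i) (Bp j))
    (hdisj2 : ∀ i j, i ≠ j → Disjoint (B'p i) (B'p j))
    (hdisj3 : ∀ i j, Disjoint (Bp i) (B'p j))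
    (hmap : ∀ i, γ i • (B' i)ᶜ = Bp i)
    (hmap' : ∀ i, (γ i)⁻¹ • (B i)ᶜ = B'p i)
    {k : ℕ} (hk : 2 ≤ k) (idx : Fin k → Fin g) (sgn : Fin k → Bool)
    (hred : ∀ (j : ℕ) (hj : j + 1 < k),
      idx ⟨j, by omega⟩ = idx ⟨j + 1, hj⟩ → sgn ⟨j, by omega⟩ = sgn ⟨j + 1, hj⟩) :
    ∀ b : X, b ∈ ((⋃ i, B i) ∪ ⋃ i, B' i)ᶜ →
      (List.ofFn fun j : Fin k => if sgn j then γ (idx j) else (γ (idx j))⁻¹).prod • b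
        ∉ ((⋃ i, B i) ∪ ⋃ i, B' i)ᶜ := by
  intro b hb
  have hbB : ∀ i, b ∉ B i := fun i h => hb (Or.inl (Set.mem_iUnion.mpr ⟨i, h⟩))
  have hbB' : ∀ i, b ∉ B' i := fun i h => hb (Or.inr (Set.mem_iUnion.mpr ⟨i, h⟩))
  -- the list of pairs
  have hchain : List.Chain' (fun a c : Fin g × Bool => a.1 = c.1 → a.2 = c.2)
      (List.ofFn (fun j : Fin k => (idx j, sgn j))) := by
    refine List.isChain_iff_getElem.mpr ?_
    intro j hj
    simp only [List.length_ofFn] at hj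
    have hj' : j + 1 < k := by omega
    simp only [List.getElem_ofFn]
    intro h
    exact hred j hj' (by simpa using h)
  have hmapl : (List.ofFn fun j : Fin k => if sgn j then γ (idx j) else (γ (idx j))⁻¹)
      = (List.ofFn (fun j : Fin k => (idx j, sgn j))).map
        (fun q => if q.2 then γ q.1 else (γ q.1)⁻¹) := by
    rw [List.map_ofFn]; rfl
  have hlen : (List.ofFn (fun j : Fin k => (idx j, sgn j))).length = k := by
    simp
  obtain ⟨p, t, hpt⟩ := List.exists_cons_of_ne_nil
    (l := List.ofFn (fun j : Fin k => (idx j, sgn j)))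
    (by intro h; rw [h] at hlen; simp only [List.length_nil] at hlen; omega)
  have htne : t ≠ [] := by
    intro h
    rw [hpt, h] at hlen
    simp only [List.length_cons, List.length_nil] at hlen
    omega
  rw [hpt] at hchain
  have := (pingpong_aux γ B B' Bp B'p hBsub hB'sub hdisj1 hdisj2 hdisj3 hmap hmap'
    b hbB hbB' p t hchain).2 htne
  rw [hmapl, hpt]
  intro hcon
  rcases Bool.eq_false_or_eq_true p.2 with h2 | h2
  · rw [if_pos h2] at this
    exact hcon (Or.inl (Set.mem_iUnion.mpr ⟨p.1, this⟩))
  · rw [if_neg (by simp [h2])] at this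
    exact hcon (Or.inr (Set.mem_iUnion.mpr ⟨p.1, this⟩))
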